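/- The formal power series identity Σ_{n≥1} Q(n) q^n = Σ_{s≥1} q^s Π_{j≥s+1} 1/(1−q^j) holds, where Q(n) is the number of partitions of n whose smallest part occurs exactly once. -/

import Mathlib

open Multiset

/-- `s` is the smallest part of the partition `p`. -/
def IsSmallest {n : ℕ} (s : ℕ) (p : Nat.Partition n) : Prop :=
  s ∈ p.parts ∧ ∀ x ∈ p.parts, s ≤ x

/-- A partition is of the "Second Kind" if it has exactly one part or its smallest part is
strictly less than every other part, i.e. its smallest part occurs exactly once. -/
def SecondKind {n : ℕ} (p : Nat.Partition n) : Prop :=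
  ∃ s, IsSmallest s p ∧ p.parts.count s = 1

/-- Second kind for the second method: the number ℵ of unit parts satisfies
`1 ≤ ℵ < m` where `m` is the smallest part greater than 1. -/
def SecondKind2 {n : ℕ} (p : Nat.Partition n) : Prop :=
  ∃ m ∈ p.parts, 1 < m ∧ (∀ x ∈ p.parts, 1 < x → m ≤ x) ∧
    1 ≤ p.parts.count 1 ∧ p.parts.count 1 < m

/-- A partition is of the "First Kind" if it has at least two parts and its two smallest
parts are equal, i.e. its smallest part occurs at least twice. -/
def FirstKind {n : ℕ} (p : Nat.Partition n) : Prop :=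
  ∃ s, IsSmallest s p ∧ 2 ≤ p.parts.count s

namespace Stmt9Aux

noncomputable section

open PowerSeries Finset
open scoped Classical

variable {α : Type*}

/-- A convenience constructor for the power series whose coefficients indicate a subset. -/
def indicatorSeries (α : Type*) [Semiring α] (s : Set ℕ) : PowerSeries α :=
  PowerSeries.mk fun n => if n ∈ s then 1 else 0

theorem coeff_indicator (s : Set ℕ) [Semiring α] (n : ℕ) :
    coeff (R := α) n (indicatorSeries _ s) = if n ∈ s then 1 else 0 :=
  coeff_mk _ _

theorem constantCoeff_indicator (s : Set ℕ) [Semiring α] :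
    constantCoeff (R := α) (indicatorSeries _ s) = if 0 ∈ s then 1 else 0 :=
  rfl

theorem num_series' [Field α] (i : ℕ) :
    (1 - (X : PowerSeries α) ^ (i + 1))⁻¹ = indicatorSeries α {k | i + 1 ∣ k} := by
  rw [PowerSeries.inv_eq_iff_mul_eq_one]
  · ext n
    cases n with
    | zero => simp [mul_sub, zero_pow, constantCoeff_indicator]
    | succ n =>
      simp only [coeff_one, if_false, mul_sub, mul_one, coeff_indicator,
        LinearMap.map_sub, reduceCtorEq]
      simp_rw [coeff_mul, coeff_X_pow, coeff_indicator, @boole_mul _ _ _ _]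
      rw [@Finset.sum_ite _ _ _ _ _ (fun _ => Classical.propDecidable _), Finset.sum_ite]
      simp_rw [@Finset.filter_filter _ _ _ _ _, Finset.sum_const_zero, add_zero, Finset.sum_const, nsmul_eq_mul, mul_one,
        sub_eq_iff_eq_add, zero_add]
      symm
      split_ifs with h
      · suffices #{a ∈ antidiagonal (n + 1) | i + 1 ∣ a.fst ∧ a.snd = i + 1} = 1 by
          simp only [Set.mem_setOf_eq]; convert congr_arg ((↑) : ℕ → α) this; norm_cast
        rw [Finset.card_eq_one]
        cases' h with p hp
        refine ⟨((i + 1) * (p - 1), i + 1), ?_⟩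
        ext ⟨a₁, a₂⟩
        simp only [Finset.mem_filter, Prod.mk_inj, Finset.HasAntidiagonal.mem_antidiagonal, Finset.mem_singleton]
        constructor
        · rintro ⟨a_left, ⟨a, rfl⟩, rfl⟩
          refine ⟨?_, rfl⟩
          rw [Nat.mul_sub_left_distrib, ← hp, ← a_left, mul_one, Nat.add_sub_cancel]
        · rintro ⟨rfl, rfl⟩
          match p with
          | 0 => rw [mul_zero] at hp; cases hp
          | p + 1 => rw [hp]; simp [mul_add]
      · suffices #{a ∈ antidiagonal (n + 1) | i + 1 ∣ a.fst ∧ a.snd = i + 1} = 0 by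
          simp only [Set.mem_setOf_eq]; convert congr_arg ((↑) : ℕ → α) this; norm_cast
        rw [Finset.card_eq_zero]
        apply Finset.eq_empty_of_forall_notMem
        simp only [Prod.forall, Finset.mem_filter, not_and, Finset.HasAntidiagonal.mem_antidiagonal]
        rintro _ h₁ h₂ ⟨a, rfl⟩ rfl
        apply h
        simp [← h₂]
  · simp [zero_pow]

-- The main workhorse (copied from the mathlib Archive).
theorem partialGF_prop (α : Type*) [CommSemiring α] (n : ℕ) (s : Finset ℕ) (hs : ∀ i ∈ s, 0 < i)
    (c : ℕ → Set ℕ) (hc : ∀ i, i ∉ s → 0 ∈ c i) :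
    #{p : n.Partition | (∀ j, p.parts.count j ∈ c j) ∧ ∀ j ∈ p.parts, j ∈ s} =
      coeff (R := α) n (∏ i ∈ s, indicatorSeries α ((· * i) '' c i)) := by
  simp_rw [coeff_prod, coeff_indicator, Finset.prod_boole, Finset.sum_boole]
  apply congr_arg
  simp only [mem_univ, forall_true_left, not_and, not_forall, exists_prop,
    Set.mem_image, not_exists]
  set φ : (a : Nat.Partition n) →
    a ∈ filter (fun p ↦ (∀ (j : ℕ), Multiset.count j p.parts ∈ c j) ∧ ∀ j ∈ p.parts, j ∈ s) univ →
    ℕ →₀ ℕ := fun p _ => {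
      toFun := fun i => Multiset.count i p.parts • i
      support := Finset.filter (fun i => i ≠ 0) p.parts.toFinset
      mem_support_toFun := fun a => by
        simp only [smul_eq_mul, ne_eq, mul_eq_zero, Multiset.count_eq_zero]
        rw [not_or, not_not]
        simp only [Multiset.mem_toFinset, not_not, Finset.mem_filter] }
  refine Finset.card_bij φ ?_ ?_ ?_
  · intro a ha
    simp only [φ, not_forall, not_exists, not_and, exists_prop, Finset.mem_filter]
    rw [mem_finsuppAntidiag]
    dsimp only [ne_eq, smul_eq_mul, id_eq, eq_mpr_eq_cast, le_eq_subset, Finsupp.coe_mk]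
    simp only [mem_univ, forall_true_left, not_and, not_forall, exists_prop,
      Finset.mem_filter, true_and] at ha
    refine ⟨⟨?_, fun i ↦ ?_⟩, fun i _ ↦ ⟨a.parts.count i, ha.1 i, rfl⟩⟩
    · conv_rhs => simp [← a.parts_sum]
      rw [sum_multiset_count_of_subset _ s]
      · simp only [smul_eq_mul]
      · intro i
        simp only [Multiset.mem_toFinset, not_not, Finset.mem_filter]
        apply ha.2
    · simp only [ne_eq, Multiset.mem_toFinset, not_not, Finset.mem_filter, and_imp]
      exact fun hi _ ↦ ha.2 i hi
  · intro p₁ hp₁ p₂ hp₂ h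
    apply Nat.Partition.ext
    simp only [true_and, mem_univ, Finset.mem_filter] at hp₁ hp₂
    ext i
    simp only [φ, ne_eq, Multiset.mem_toFinset, not_not, smul_eq_mul, Finsupp.mk.injEq] at h
    by_cases hi : i = 0
    · rw [hi]
      rw [Multiset.count_eq_zero_of_notMem]
      · rw [Multiset.count_eq_zero_of_notMem]
        intro a; exact Nat.lt_irrefl 0 (hs 0 (hp₂.2 0 a))
      intro a; exact Nat.lt_irrefl 0 (hs 0 (hp₁.2 0 a))
    · rw [← mul_left_inj' hi]
      rw [funext_iff] at h
      exact h.2 i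
  · simp only [φ, Finset.mem_filter, mem_finsuppAntidiag, mem_univ, exists_prop, true_and, and_assoc]
    rintro f ⟨hf, hf₃, hf₄⟩
    have hf' : f ∈ finsuppAntidiag s n := mem_finsuppAntidiag.mpr ⟨hf, hf₃⟩
    simp only [mem_finsuppAntidiag] at hf'
    refine ⟨⟨∑ i ∈ s, Multiset.replicate (f i / i) i, ?_, ?_⟩, ?_, ?_, ?_⟩
    · intro i hi
      simp only [exists_prop, Multiset.mem_sum, Finset.mem_map, Function.Embedding.coeFn_mk] at hi
      rcases hi with ⟨t, ht, z⟩
      apply hs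
      rwa [Multiset.eq_of_mem_replicate z]
    · simp_rw [Multiset.sum_sum, Multiset.sum_replicate, Nat.nsmul_eq_mul]
      rw [← hf'.1]
      refine Finset.sum_congr rfl fun i hi => Nat.div_mul_cancel ?_
      rcases hf₄ i hi with ⟨w, _, hw₂⟩
      rw [← hw₂]
      exact dvd_mul_left _ _
    · intro i
      simp_rw [Multiset.count_sum', Multiset.count_replicate, Finset.sum_ite_eq']
      split_ifs with h
      · rcases hf₄ i h with ⟨w, hw₁, hw₂⟩
        rwa [← hw₂, Nat.mul_div_cancel _ (hs i h)]
      · exact hc _ h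
    · intro i hi
      rw [Multiset.mem_sum] at hi
      rcases hi with ⟨j, hj₁, hj₂⟩
      rwa [Multiset.eq_of_mem_replicate hj₂]
    · ext i
      simp_rw [Multiset.count_sum', Multiset.count_replicate, Finset.sum_ite_eq']
      simp only [ne_eq, Multiset.mem_toFinset, not_not, smul_eq_mul, ite_mul,
        zero_mul, Finsupp.coe_mk]
      split_ifs with h
      · apply Nat.div_mul_cancel
        rcases hf₄ i h with ⟨w, _, hw₂⟩
        apply Dvd.intro_left _ hw₂
      · apply symm
        rw [← Finsupp.notMem_support_iff]
        exact Finset.notMem_mono hf'.2 h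

/-- Coefficient of the truncated product counts partitions with parts in `Icc (s+1) n`. -/
theorem coeff_prod_inv [Field α] (s n : ℕ) :
    ((Finset.univ.filter fun p : (n - s).Partition =>
        ∀ j ∈ p.parts, j ∈ Finset.Icc (s + 1) n).card : α) =
      coeff (R := α) (n - s) (∏ j ∈ Finset.Icc (s + 1) n, (1 - (X : PowerSeries α) ^ j)⁻¹) := by
  have hs : ∀ i ∈ Finset.Icc (s + 1) n, 0 < i := fun i hi =>
    lt_of_lt_of_le s.succ_pos (Finset.mem_Icc.mp hi).1
  have := partialGF_prop α (n - s) (Finset.Icc (s + 1) n) hs (fun _ => Set.univ)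
    (fun _ _ => trivial)
  rw [show (Finset.univ.filter fun p : (n - s).Partition =>
        ∀ j ∈ p.parts, j ∈ Finset.Icc (s + 1) n) =
      (Finset.univ.filter fun p : (n - s).Partition =>
        (∀ j, p.parts.count j ∈ (Set.univ : Set ℕ)) ∧
          ∀ j ∈ p.parts, j ∈ Finset.Icc (s + 1) n) by
    apply Finset.filter_congr; intro p _; simp]
  rw [this]
  congr 1
  apply Finset.prod_congr rfl
  intro j hj
  have hj1 : 1 ≤ j := le_trans (Nat.le_add_left 1 s) (Finset.mem_Icc.mp hj).1
  obtain ⟨i, rfl⟩ : ∃ i, j = i + 1 := ⟨j - 1, by omega⟩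
  have hset : ((fun x => x * (i + 1)) '' Set.univ) = {k | i + 1 ∣ k} := by
    ext k
    simp only [Set.image_univ, Set.mem_range, Set.mem_setOf_eq]
    constructor
    · rintro ⟨c, rfl⟩; exact Dvd.intro_left c rfl
    · rintro ⟨c, rfl⟩
      exact ⟨c, mul_comm c (i + 1)⟩
  rw [num_series', hset]

/-- The chosen smallest part of a second-kind partition equals any smallest part. -/
theorem choose_eq {n : ℕ} {p : n.Partition} (h : SecondKind p) {s : ℕ}
    (hs : IsSmallest s p) : h.choose = s :=
  le_antisymm (h.choose_spec.1.2 s hs.1) (hs.2 h.choose h.choose_spec.1.1)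

/-- A sigma-extensionality helper. -/
theorem sigma_ext {n : ℕ} (a b : Σ s : ℕ, (n - s).Partition)
    (h1 : a.1 = b.1) (h2 : a.2.parts = b.2.parts) : a = b := by
  obtain ⟨s, q⟩ := a
  obtain ⟨t, r⟩ := b
  dsimp at h1
  subst h1
  simp only [Sigma.mk.inj_iff, heq_eq_eq, true_and]
  exact Nat.Partition.ext h2

/-- The bijection: second-kind partitions of `n` correspond to pairs `(s, q)` with
`q` a partition of `n - s` into parts at least `s + 1`. -/
theorem card_secondKind (n : ℕ) (hn : 1 ≤ n) :
    (Finset.univ.filter fun p : n.Partition => SecondKind p).card =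
      ∑ s ∈ Finset.Icc 1 n, (Finset.univ.filter fun p : (n - s).Partition =>
        ∀ j ∈ p.parts, j ∈ Finset.Icc (s + 1) n).card := by
  rw [← Finset.card_sigma]
  refine Finset.card_bij
    (fun p hp =>
      have h : SecondKind p := (Finset.mem_filter.mp hp).2
      ⟨h.choose, ⟨p.parts.erase h.choose,
        fun {j} hj => p.parts_pos (Multiset.erase_subset h.choose p.parts hj), by
          have hc := h.choose_spec
          have hmem : h.choose ∈ p.parts := hc.1.1
          have := congrArg Multiset.sum (Multiset.cons_erase hmem)
          rw [Multiset.sum_cons, p.parts_sum] at this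
          have hle : h.choose ≤ n := by omega
          omega⟩⟩)
    ?_ ?_ ?_
  · -- maps into the sigma finset
    intro p hp
    have h : SecondKind p := (Finset.mem_filter.mp hp).2
    have hc := h.choose_spec
    set s := h.choose with hsdef
    have hmem : s ∈ p.parts := hc.1.1
    have hpos : 0 < s := p.parts_pos hmem
    have hsle : s ≤ n := by
      have := Multiset.single_le_sum (fun x _ => Nat.zero_le x) _ hmem
      rwa [p.parts_sum] at this
    rw [Finset.mem_sigma]
    constructor
    · exact Finset.mem_Icc.mpr ⟨hpos, hsle⟩
    · rw [Finset.mem_filter]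
      refine ⟨Finset.mem_univ _, ?_⟩
      intro j hj
      replace hj : j ∈ p.parts.erase s := hj
      have hjp : j ∈ p.parts := Multiset.erase_subset _ _ hj
      have hjs : s ≤ j := hc.1.2 j hjp
      have hjne : j ≠ s := by
        intro hje
        have h0 : Multiset.count s (p.parts.erase s) = 0 := by
          rw [Multiset.count_erase_self, hc.2]
        rw [hje] at hj
        exact (Multiset.count_eq_zero.mp h0) hj
      have hjn : j ≤ n := by
        have := Multiset.single_le_sum (fun x _ => Nat.zero_le x) _ hjp
        rwa [p.parts_sum] at this
      refine Finset.mem_Icc.mpr ⟨?_, hjn⟩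
      show s + 1 ≤ j
      omega
  · -- injectivity
    intro p₁ hp₁ p₂ hp₂ heq
    have h₁ : SecondKind p₁ := (Finset.mem_filter.mp hp₁).2
    have h₂ : SecondKind p₂ := (Finset.mem_filter.mp hp₂).2
    have hfst : h₁.choose = h₂.choose := congrArg Sigma.fst heq
    have hsnd : p₁.parts.erase h₁.choose = p₂.parts.erase h₂.choose :=
      congrArg (fun x : Σ s : ℕ, (n - s).Partition => x.2.parts) heq
    apply Nat.Partition.ext
    rw [hfst] at hsnd
    rw [← Multiset.cons_erase h₁.choose_spec.1.1, ← Multiset.cons_erase h₂.choose_spec.1.1,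
      hfst, hsnd]
  · -- surjectivity
    rintro ⟨s, q⟩ hsq
    rw [Finset.mem_sigma] at hsq
    obtain ⟨hs0, hq⟩ := hsq
    have hs1 : 1 ≤ s := (Finset.mem_Icc.mp hs0).1
    have hs2 : s ≤ n := (Finset.mem_Icc.mp hs0).2
    have hq' : ∀ j ∈ q.parts, s + 1 ≤ j ∧ j ≤ n := by
      intro j hj
      have := (Finset.mem_filter.mp hq).2 j hj
      exact Finset.mem_Icc.mp this
    have hsnot : s ∉ q.parts := fun hmem => by have := (hq' s hmem).1; omega
    have hpos : ∀ {j : ℕ}, j ∈ s ::ₘ q.parts → 0 < j := by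
      intro j hj
      rcases Multiset.mem_cons.mp hj with rfl | hj'
      · omega
      · exact q.parts_pos hj'
    have hsum : (s ::ₘ q.parts).sum = n := by
      rw [Multiset.sum_cons, q.parts_sum]; omega
    set P : n.Partition := ⟨s ::ₘ q.parts, hpos, hsum⟩ with hPdef
    have hsmall : IsSmallest s P := by
      refine ⟨Multiset.mem_cons_self _ _, ?_⟩
      intro x hx
      rcases Multiset.mem_cons.mp hx with rfl | hx'
      · exact le_rfl
      · have := (hq' x hx').1; omega
    have hSK : SecondKind P := by
      refine ⟨s, hsmall, ?_⟩
      show Multiset.count s (s ::ₘ q.parts) = 1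
      rw [Multiset.count_cons_self, Multiset.count_eq_zero.mpr hsnot]
    have hmemP : P ∈ Finset.univ.filter fun p : n.Partition => SecondKind p :=
      Finset.mem_filter.mpr ⟨Finset.mem_univ _, hSK⟩
    refine ⟨P, hmemP, ?_⟩
    apply sigma_ext
    · exact choose_eq (Finset.mem_filter.mp hmemP).2 hsmall
    · show P.parts.erase ((Finset.mem_filter.mp hmemP).2).choose = q.parts
      rw [choose_eq (Finset.mem_filter.mp hmemP).2 hsmall]
      show (s ::ₘ q.parts).erase s = q.parts
      exact Multiset.erase_cons_head s q.parts
end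

end Stmt9Aux

theorem stmt9 (n : ℕ) (hn : 1 ≤ n) :
    (Nat.card {p : Nat.Partition n // SecondKind p} : ℚ) =
      PowerSeries.coeff (R := ℚ) n
        (∑ s ∈ Finset.Icc 1 n, (PowerSeries.X : PowerSeries ℚ) ^ s *
          ∏ j ∈ Finset.Icc (s + 1) n, (1 - (PowerSeries.X : PowerSeries ℚ) ^ j)⁻¹) := by
  classical
  rw [map_sum]
  have hterm : ∀ s ∈ Finset.Icc 1 n,
      (PowerSeries.coeff (R := ℚ) n) ((PowerSeries.X : PowerSeries ℚ) ^ s *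
        ∏ j ∈ Finset.Icc (s + 1) n, (1 - (PowerSeries.X : PowerSeries ℚ) ^ j)⁻¹) =
      ((Finset.univ.filter fun p : (n - s).Partition =>
        ∀ j ∈ p.parts, j ∈ Finset.Icc (s + 1) n).card : ℚ) := by
    intro s hs
    rw [Finset.mem_Icc] at hs
    rw [PowerSeries.coeff_X_pow_mul', if_pos hs.2, ← Stmt9Aux.coeff_prod_inv]
  rw [Finset.sum_congr rfl hterm]
  have hcard : Nat.card {p : Nat.Partition n // SecondKind p} =
      (Finset.univ.filter fun p : n.Partition => SecondKind p).card := by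
    rw [Nat.card_eq_fintype_card, Fintype.card_subtype]
  rw [hcard, Stmt9Aux.card_secondKind n hn]
  push_cast
  rfl
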